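/- Let U ∈ ℚ[[z]] be the formal power series U = ∑_{m ≥ 1} (1/m)·binomial(3m-2, m-1)·(1/2^{3m-1})·zᵐ, which satisfies U·(U-2)² = z. Fix n ∈ ℕ. Then the formal power series -(2 - U)ⁿ·(3U - 2)⁻¹ (well-defined since 3U - 2 has invertible constant term -2) has, for every ℓ ≥ 0, z^ℓ-coefficient equal to (2 : ℚ)^{(n : ℤ) - 3ℓ - 1} · (∏_{i=0}^{ℓ-1} (3ℓ - n - i)) / ℓ!, i.e., 2^{n-3ℓ-1} times the generalized binomial coefficient C(3ℓ-n, ℓ). -/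

import Mathlib

open Finset PowerSeries

namespace FBT

noncomputable def dp (x : ℚ) (k : ℕ) : ℚ := ∏ i ∈ Finset.range k, (x - i)
lemma dp_zero (x : ℚ) : dp x 0 = 1 := by simp [dp]
lemma dp_succ (x : ℚ) (k : ℕ) : dp x (k+1) = dp x k * (x - k) := Finset.prod_range_succ _ _
lemma dp_shift (x : ℚ) (k : ℕ) : dp (x+1) (k+1) = (x+1) * dp x k := by
  rw [dp, Finset.prod_range_succ', mul_comm]
  congr 1
  · push_cast; ring
  · exact Finset.prod_congr rfl fun i _ => by push_cast; ring
lemma dp_pascal (x : ℚ) (k : ℕ) :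
    dp (x+1) (k+1) - dp x (k+1) = (k+1) * dp x k := by rw [dp_shift, dp_succ]; ring

lemma dp_nat (m k : ℕ) (h : k ≤ m) : dp (m:ℚ) k = (m.descFactorial k : ℚ) := by
  induction k with
  | zero => simp [dp]
  | succ k ih =>
    have hk : k ≤ m := Nat.le_of_succ_le h
    rw [dp_succ, ih hk, Nat.descFactorial_succ]
    push_cast [Nat.cast_sub hk]
    ring

noncomputable def v (n ℓ : ℕ) : ℚ :=
  (2 : ℚ) ^ ((n : ℤ) - 3 * ℓ - 1) *
    (∏ i ∈ Finset.range ℓ, ((3 * ℓ : ℤ) - n - i : ℚ)) / (Nat.factorial ℓ : ℚ)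

lemma two_zpow_ne (a : ℤ) : (2:ℚ)^a ≠ 0 := zpow_ne_zero a two_ne_zero
lemma two_zpow_add (a b : ℤ) : (2:ℚ)^(a+b) = 2^a * 2^b := zpow_add₀ two_ne_zero a b

lemma v_eq (n ℓ : ℕ) :
    v n ℓ = (2 : ℚ) ^ ((n : ℤ) - 3 * ℓ - 1) * dp ((3*ℓ:ℚ) - n) ℓ / (Nat.factorial ℓ : ℚ) := by
  unfold v dp
  congr 1
  congr 1
  exact Finset.prod_congr rfl fun i _ => by push_cast; ring

lemma v_zero (n : ℕ) : v n 0 = (2:ℚ) ^ ((n:ℤ) - 1) := by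
  simp [v]

-- key product identity for the order-2 recurrence
lemma dp_key (l : ℕ) :
    (2*(l:ℚ)+2)*(2*l+1) * dp (3*l+3) (l+1) = (3*l+3)*(3*l+2)*(3*l+1) * dp (3*l) l := by
  have h1 : dp (3*(l:ℚ)+3) (l+3) = (3*l+3)*(3*l+2)*(3*l+1) * dp (3*l) l := by
    have a1 := dp_shift (3*(l:ℚ)+2) (l+2)
    have a2 := dp_shift (3*(l:ℚ)+1) (l+1)
    have a3 := dp_shift (3*(l:ℚ)) l
    have e1 : (3*(l:ℚ)+2)+1 = 3*l+3 := by ring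
    have e2 : (3*(l:ℚ)+1)+1 = 3*l+2 := by ring
    have e3 : (3*(l:ℚ))+1 = 3*l+1 := by ring
    rw [e1] at a1; rw [e2] at a2; rw [e3] at a3
    rw [a1, a2, a3]; ring
  have h2 : dp (3*(l:ℚ)+3) (l+3) = dp (3*l+3) (l+1) * (2*l+2) * (2*l+1) := by
    have b1 := dp_succ (3*(l:ℚ)+3) (l+2)
    have b2 := dp_succ (3*(l:ℚ)+3) (l+1)
    rw [b1, b2]; push_cast; ring
  rw [h2] at h1
  linear_combination h1

lemma v0_rec (l : ℕ) :
    16*((l:ℚ)+1)*(2*l+1) * v 0 (l+1) = 3*(3*l+1)*(3*l+2) * v 0 l := by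
  rw [v_eq, v_eq]
  rw [show ((0:ℕ):ℤ) - 3 * ((l+1:ℕ):ℤ) - 1 = (-(3*(l:ℤ)) - 1) + (-3) from by push_cast; ring,
      show ((0:ℕ):ℤ) - 3 * ((l:ℕ):ℤ) - 1 = -(3*(l:ℤ)) - 1 from by push_cast; ring,
      two_zpow_add,
      show (3*(((l:ℕ)+1:ℕ)):ℚ) - ((0:ℕ):ℚ) = 3*(l:ℚ)+3 from by push_cast; ring,
      show (3*(l:ℕ):ℚ) - ((0:ℕ):ℚ) = 3*(l:ℚ) from by push_cast; ring]
  rw [show ((2:ℚ)^(-3:ℤ)) = 1/8 from by norm_num]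
  set E : ℚ := (2:ℚ)^(-(3*(l:ℤ)) - 1) with hE
  have hfact : ((Nat.factorial (l+1) : ℚ)) = (l+1) * (Nat.factorial l) := by
    rw [Nat.factorial_succ]; push_cast; ring
  rw [hfact]
  have hfne : ((Nat.factorial l : ℚ)) ≠ 0 := Nat.cast_ne_zero.mpr (Nat.factorial_ne_zero l)
  have hlne : ((l:ℚ)+1) ≠ 0 := by positivity
  have hk := dp_key l
  have hk' : 2*(2*(l:ℚ)+1)*dp (3*l+3) (l+1) = 3*(3*l+2)*(3*l+1)*dp (3*l) l :=
    mul_left_cancel₀ hlne (by linear_combination hk)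
  field_simp
  rw [show ((l:ℚ)+1)*3 = 3*l+3 by ring, show (l:ℚ)*3 = 3*l by ring]
  linear_combination (8*E) * hk'

lemma v1_id (k : ℕ) : 3 * v 1 (k+1) = 4 * v 0 (k+1) := by
  rw [v_eq, v_eq]
  rw [show ((1:ℕ):ℤ) - 3 * ((k+1:ℕ):ℤ) - 1 = (-(3*(k:ℤ)) - 3) from by push_cast; ring,
      show ((0:ℕ):ℤ) - 3 * ((k+1:ℕ):ℤ) - 1 = (-(3*(k:ℤ)) - 3) + (-1) from by push_cast; ring,
      two_zpow_add,
      show ((2:ℚ)^(-1:ℤ)) = 1/2 from by norm_num,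
      show (3*(((k:ℕ)+1:ℕ)):ℚ) - ((1:ℕ):ℚ) = 3*(k:ℚ)+2 from by push_cast; ring,
      show (3*(((k:ℕ)+1:ℕ)):ℚ) - ((0:ℕ):ℚ) = 3*(k:ℚ)+3 from by push_cast; ring]
  set E : ℚ := (2:ℚ)^(-(3*(k:ℤ)) - 3) with hE
  have hfne : ((Nat.factorial (k+1) : ℚ)) ≠ 0 := Nat.cast_ne_zero.mpr (Nat.factorial_ne_zero _)
  have d1 : dp (3*(k:ℚ)+3) (k+1) = (3*(k:ℚ)+3) * dp (3*(k:ℚ)+2) k := by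
    have := dp_shift (3*(k:ℚ)+2) k
    rw [show (3*(k:ℚ)+2)+1 = 3*(k:ℚ)+3 from by ring] at this
    exact this
  have d2 : dp (3*(k:ℚ)+2) (k+1) = dp (3*(k:ℚ)+2) k * (2*(k:ℚ)+2) := by
    have := dp_succ (3*(k:ℚ)+2) k
    rw [this]; ring
  rw [d1, d2]
  field_simp
  ring

lemma v2_id (k : ℕ) :
    3 * v 2 (k+1) = 8 * v 0 (k+1)
      - ((1/((k:ℚ)+1)) * (Nat.choose (3*k+1) k : ℚ) * (1/2^(3*k+2)))
      - 2 * v 1 (k+1) := by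
  have hu2 : (1:ℚ)/2^(3*k+2) = (2:ℚ)^(-(3*(k:ℤ))-2) := by
    rw [one_div, ← zpow_natCast (2:ℚ) (3*k+2), ← zpow_neg]
    congr 1
    push_cast; ring
  rw [hu2, v_eq, v_eq, v_eq]
  rw [show ((2:ℕ):ℤ) - 3 * ((k+1:ℕ):ℤ) - 1 = (-(3*(k:ℤ)) - 2) from by push_cast; ring,
      show ((0:ℕ):ℤ) - 3 * ((k+1:ℕ):ℤ) - 1 = (-(3*(k:ℤ)) - 2) + (-2) from by push_cast; ring,
      show ((1:ℕ):ℤ) - 3 * ((k+1:ℕ):ℤ) - 1 = (-(3*(k:ℤ)) - 2) + (-1) from by push_cast; ring,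
      two_zpow_add, two_zpow_add,
      show ((2:ℚ)^(-2:ℤ)) = 1/4 from by norm_num,
      show ((2:ℚ)^(-1:ℤ)) = 1/2 from by norm_num,
      show (3*(((k:ℕ)+1:ℕ)):ℚ) - ((2:ℕ):ℚ) = 3*(k:ℚ)+1 from by push_cast; ring,
      show (3*(((k:ℕ)+1:ℕ)):ℚ) - ((0:ℕ):ℚ) = 3*(k:ℚ)+3 from by push_cast; ring,
      show (3*(((k:ℕ)+1:ℕ)):ℚ) - ((1:ℕ):ℚ) = 3*(k:ℚ)+2 from by push_cast; ring]
  set E : ℚ := (2:ℚ)^(-(3*(k:ℤ)) - 2) with hE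
  -- choose in terms of dp
  have hch : (Nat.choose (3*k+1) k : ℚ) = dp (3*(k:ℚ)+1) k / (Nat.factorial k : ℚ) := by
    have h1 : dp ((3*k+1:ℕ):ℚ) k = ((3*k+1).descFactorial k : ℚ) := dp_nat _ _ (by omega)
    rw [show ((3*k+1:ℕ):ℚ) = 3*(k:ℚ)+1 from by push_cast; ring] at h1
    rw [h1, Nat.descFactorial_eq_factorial_mul_choose]
    push_cast
    field_simp [Nat.factorial_ne_zero]
  rw [hch]
  set Q : ℚ := dp (3*(k:ℚ)+1) k with hQ
  have d1 : dp (3*(k:ℚ)+1) (k+1) = (2*(k:ℚ)+1) * Q := by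
    rw [dp_succ]; ring
  have d2 : dp (3*(k:ℚ)+2) (k+1) = (3*(k:ℚ)+2) * Q := by
    have := dp_shift (3*(k:ℚ)+1) k
    rw [show (3*(k:ℚ)+1)+1 = 3*(k:ℚ)+2 from by ring] at this
    exact this
  have d3 : (2*(k:ℚ)+2) * dp (3*(k:ℚ)+3) (k+1) = (3*(k:ℚ)+3)*(3*(k:ℚ)+2) * Q := by
    have s1 := dp_shift (3*(k:ℚ)+2) (k+1)
    rw [show (3*(k:ℚ)+2)+1 = 3*(k:ℚ)+3 from by ring, d2] at s1
    have s2 := dp_succ (3*(k:ℚ)+3) (k+1)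
    rw [s1] at s2
    push_cast at s2
    linear_combination -s2
  have hfact : ((Nat.factorial (k+1) : ℚ)) = (k+1) * (Nat.factorial k) := by
    rw [Nat.factorial_succ]; push_cast; ring
  rw [hfact, d1, d2]
  have hfne : ((Nat.factorial k : ℚ)) ≠ 0 := Nat.cast_ne_zero.mpr (Nat.factorial_ne_zero _)
  have hkne : ((k:ℚ)+1) ≠ 0 := by positivity
  have d3' : 2*dp (3*(k:ℚ)+3) (k+1) = 3*(3*(k:ℚ)+2)*Q :=
    mul_left_cancel₀ hkne (by linear_combination d3)
  field_simp
  rw [show 3*((k:ℚ)+1) = 3*k+3 by ring]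
  linear_combination (-(4*E)) * d3'

lemma v3_id0 (n : ℕ) : v (n+3) 0 = 2 * v (n+2) 0 := by
  rw [v_zero, v_zero,
    show ((n+3:ℕ):ℤ) - 1 = (((n+2:ℕ):ℤ) - 1) + 1 from by push_cast; ring, two_zpow_add]
  norm_num
  ring

lemma v3_id (n k : ℕ) : v (n+3) (k+1) = 2 * v (n+2) (k+1) - v n k := by
  rw [v_eq, v_eq, v_eq]
  rw [show ((n+3:ℕ):ℤ) - 3 * ((k+1:ℕ):ℤ) - 1 = ((n:ℤ) - 3*(k:ℤ) - 1) from by push_cast; ring,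
      show ((n+2:ℕ):ℤ) - 3 * ((k+1:ℕ):ℤ) - 1 = ((n:ℤ) - 3*(k:ℤ) - 1) + (-1) from by push_cast; ring,
      show ((n:ℕ):ℤ) - 3 * ((k:ℕ):ℤ) - 1 = ((n:ℤ) - 3*(k:ℤ) - 1) from by push_cast; ring,
      two_zpow_add,
      show ((2:ℚ)^(-1:ℤ)) = 1/2 from by norm_num,
      show (3*(((k:ℕ)+1:ℕ)):ℚ) - ((n+3:ℕ):ℚ) = 3*(k:ℚ)-n from by push_cast; ring,
      show (3*(((k:ℕ)+1:ℕ)):ℚ) - ((n+2:ℕ):ℚ) = (3*(k:ℚ)-n)+1 from by push_cast; ring,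
      show (3*((k:ℕ)):ℚ) - ((n:ℕ):ℚ) = 3*(k:ℚ)-n from by push_cast; ring]
  set E : ℚ := (2:ℚ)^((n:ℤ) - 3*(k:ℤ) - 1) with hE
  have hp := dp_pascal (3*(k:ℚ)-n) k
  have hfact : ((Nat.factorial (k+1) : ℚ)) = (k+1) * (Nat.factorial k) := by
    rw [Nat.factorial_succ]; push_cast; ring
  rw [hfact]
  have hfne : ((Nat.factorial k : ℚ)) ≠ 0 := Nat.cast_ne_zero.mpr (Nat.factorial_ne_zero _)
  have hkne : ((k:ℚ)+1) ≠ 0 := by positivity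
  field_simp
  linear_combination (-E) * hp




theorem ode (U : PowerSeries ℚ) (hc0 : constantCoeff U = 0)
    (hUeq : U * (U - 2) ^ 2 = PowerSeries.X) :
    (32:ℚ⟦X⟧) * (X * derivative ℚ (derivative ℚ (-(3*U-2)⁻¹)))
      - 27 * (X^2 * derivative ℚ (derivative ℚ (-(3*U-2)⁻¹)))
      + 16 * (derivative ℚ (-(3*U-2)⁻¹))
      - 54 * (X * derivative ℚ (-(3*U-2)⁻¹))
      - 6 * (-(3*U-2)⁻¹) = 0 := by
  have h2 : constantCoeff (3*U-2) = -2 := by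
    simp [map_sub, map_mul, hc0, map_ofNat]
  have h2' : constantCoeff (U-2) = -2 := by
    simp [map_sub, hc0, map_ofNat]
  set W : ℚ⟦X⟧ := (3*U-2)⁻¹ with hWdef
  set Y : ℚ⟦X⟧ := (U-2)⁻¹ with hYdef
  have hW : (3*U-2) * W = 1 := PowerSeries.mul_inv_cancel _ (by rw [h2]; norm_num)
  have hY : (U-2) * Y = 1 := PowerSeries.mul_inv_cancel _ (by rw [h2']; norm_num)
  have hDc2 : derivative ℚ (2:ℚ⟦X⟧) = 0 := by
    rw [← map_ofNat (C (R := ℚ)) 2, derivative_C]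
  have hDc3 : derivative ℚ (3:ℚ⟦X⟧) = 0 := by
    rw [← map_ofNat (C (R := ℚ)) 3, derivative_C]
  set DU : ℚ⟦X⟧ := derivative ℚ U with hDUdef
  have hDU2 : derivative ℚ (U-2) = DU := by rw [map_sub, hDc2, sub_zero]
  have hD3U2 : derivative ℚ (3*U-2) = 3 * DU := by
    rw [map_sub, Derivation.leibniz, hDc3, hDc2, smul_eq_mul, smul_eq_mul]
    ring
  have hDX : derivative ℚ (U*(U-2)^2) = (1:ℚ⟦X⟧) := by rw [hUeq, derivative_X]
  have hDU : DU * ((U-2)*(3*U-2)) = 1 := by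
    rw [Derivation.leibniz, Derivation.leibniz_pow, hDU2, smul_eq_mul] at hDX
    rw [← hDX]
    simp only [smul_eq_mul, Nat.cast_ofNat, pow_one]
    ring
  have hDUv : DU = Y * W := by
    calc DU = DU * (((U-2)*Y) * ((3*U-2)*W)) := by rw [hY, hW]; ring
    _ = (DU * ((U-2)*(3*U-2))) * (Y*W) := by ring
    _ = Y*W := by rw [hDU]; ring
  have hDW : derivative ℚ W = -3*Y*W^3 := by
    rw [hWdef, derivative_inv', hD3U2, hDUv, ← hWdef]
    ring
  have hDY : derivative ℚ Y = -(Y^3)*W := by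
    rw [hYdef, derivative_inv', hDU2, hDUv, ← hYdef]
    ring
  have hD1 : derivative ℚ (-W) = 3*Y*W^3 := by rw [map_neg, hDW]; ring
  have hD2 : derivative ℚ (3*Y*W^3) = -3*(Y^3)*W^4 - 27*(Y^2)*W^5 := by
    rw [Derivation.leibniz, Derivation.leibniz_pow, hDW, Derivation.leibniz, hDc3, hDY]
    simp only [smul_eq_mul, nsmul_eq_mul]
    norm_num
    ring
  rw [hD1, hD2, ← hUeq]
  -- now a polynomial identity in U, Y, W modulo hY, hW
  have hCne : ((U-2)^3*(3*U-2)^5) ≠ 0 := by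
    intro h0
    have : constantCoeff ((U-2)^3*(3*U-2)^5) = 256 := by
      rw [map_mul, map_pow, map_pow, h2, h2']; norm_num
    rw [h0] at this
    simp at this
  have t1 : Y^3*W^4 * ((U-2)^3*(3*U-2)^5) = 3*U-2 := by
    calc Y^3*W^4 * ((U-2)^3*(3*U-2)^5)
        = ((U-2)*Y)^3 * (((3*U-2)*W)^4 * (3*U-2)) := by ring
      _ = 3*U-2 := by rw [hY, hW]; ring
  have t2 : Y^2*W^5 * ((U-2)^3*(3*U-2)^5) = (U-2) := by
    calc Y^2*W^5 * ((U-2)^3*(3*U-2)^5)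
        = ((U-2)*Y)^2 * (((3*U-2)*W)^5 * (U-2)) := by ring
      _ = U-2 := by rw [hY, hW]; ring
  have t3 : Y*W^3 * ((U-2)^3*(3*U-2)^5) = (U-2)^2*(3*U-2)^2 := by
    calc Y*W^3 * ((U-2)^3*(3*U-2)^5)
        = ((U-2)*Y) * (((3*U-2)*W)^3 * ((U-2)^2*(3*U-2)^2)) := by ring
      _ = (U-2)^2*(3*U-2)^2 := by rw [hY, hW]; ring
  have t4 : W * ((U-2)^3*(3*U-2)^5) = (U-2)^3*(3*U-2)^4 := by
    calc W * ((U-2)^3*(3*U-2)^5)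
        = ((3*U-2)*W) * ((U-2)^3*(3*U-2)^4) := by ring
      _ = (U-2)^3*(3*U-2)^4 := by rw [hW]; ring
  have hEC : ((32:ℚ⟦X⟧) * ((U*(U-2)^2) * (-3*(Y^3)*W^4 - 27*(Y^2)*W^5))
      - 27 * ((U*(U-2)^2)^2 * (-3*(Y^3)*W^4 - 27*(Y^2)*W^5))
      + 16 * (3*Y*W^3)
      - 54 * ((U*(U-2)^2) * (3*Y*W^3))
      - 6 * (-W)) * ((U-2)^3*(3*U-2)^5) = 0 := by
    linear_combination
      ((-3)*(32*(U*(U-2)^2) - 27*(U*(U-2)^2)^2)) * t1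
      + ((-27)*(32*(U*(U-2)^2) - 27*(U*(U-2)^2)^2)) * t2
      + (3*(16 - 54*(U*(U-2)^2))) * t3
      + 6 * t4
  exact (mul_eq_zero.mp hEC).resolve_right hCne




theorem grec (U : PowerSeries ℚ) (hc0 : constantCoeff U = 0)
    (hUeq : U * (U - 2) ^ 2 = PowerSeries.X) (ℓ : ℕ) :
    16*((ℓ:ℚ)+1)*(2*ℓ+1) * (coeff (ℓ+1) (-(3*U-2)⁻¹))
      = 3*(3*ℓ+1)*(3*ℓ+2) * (coeff ℓ (-(3*U-2)⁻¹)) := by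
  have hODE := ode U hc0 hUeq
  set g : ℚ⟦X⟧ := -(3*U-2)⁻¹ with hgdef
  set D1 : ℚ⟦X⟧ := derivative ℚ g with hD1def
  set D2 : ℚ⟦X⟧ := derivative ℚ D1 with hD2def
  rw [show (32:ℚ⟦X⟧) = C 32 from (map_ofNat _ _).symm,
      show (27:ℚ⟦X⟧) = C 27 from (map_ofNat _ _).symm,
      show (16:ℚ⟦X⟧) = C 16 from (map_ofNat _ _).symm,
      show (54:ℚ⟦X⟧) = C 54 from (map_ofNat _ _).symm,
      show (6:ℚ⟦X⟧) = C 6 from (map_ofNat _ _).symm] at hODE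
  have cD1 : ∀ m : ℕ, coeff m D1 = coeff (m+1) g * (m+1) := fun m => by
    rw [hD1def, coeff_derivative]
  have cD2 : ∀ m : ℕ, coeff m D2 = coeff (m+2) g * (m+2) * (m+1) := fun m => by
    rw [hD2def, coeff_derivative, cD1]; push_cast; ring
  have cX0 : ∀ f : ℚ⟦X⟧, coeff 0 (X * f) = 0 := fun f => by
    rw [coeff_zero_eq_constantCoeff_apply, map_mul, constantCoeff_X, zero_mul]
  match ℓ with
  | 0 =>
    have h := congrArg (coeff 0) hODE
    simp only [map_sub, map_add, coeff_C_mul, map_zero] at h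
    rw [show (X^2 * D2 : ℚ⟦X⟧) = X * (X * D2) from by ring] at h
    rw [cX0, cX0, cX0, cD1 0] at h
    norm_num at h ⊢
    linarith [h]
  | 1 =>
    have h := congrArg (coeff 1) hODE
    simp only [map_sub, map_add, coeff_C_mul, map_zero] at h
    rw [show (X^2 * D2 : ℚ⟦X⟧) = X * (X * D2) from by ring] at h
    rw [coeff_succ_X_mul, coeff_succ_X_mul, coeff_succ_X_mul, cX0] at h
    rw [cD2 0, cD1 1, cD1 0] at h
    norm_num at h ⊢
    linarith [h]
  | (m+2) =>
    have h := congrArg (coeff (m+2)) hODE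
    simp only [map_sub, map_add, coeff_C_mul, map_zero] at h
    rw [show (X^2 * D2 : ℚ⟦X⟧) = X * (X * D2) from by ring] at h
    rw [coeff_succ_X_mul, coeff_succ_X_mul, coeff_succ_X_mul, coeff_succ_X_mul] at h
    rw [cD2 (m+1), cD2 m, cD1 (m+2), cD1 (m+1)] at h
    simp only [show m+1+2 = m+3 from by omega, show m+2+1 = m+3 from by omega,
      show m+1+1 = m+2 from by omega] at h ⊢
    push_cast at h ⊢
    linear_combination h




theorem main
    (U : PowerSeries ℚ)
    (hU : U = PowerSeries.mk (fun m : ℕ => if m = 0 then 0 else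
      (1 / (m : ℚ)) * (Nat.choose (3 * m - 2) (m - 1) : ℚ) * (1 / 2 ^ (3 * m - 1))))
    (hUeq : U * (U - 2) ^ 2 = PowerSeries.X)
    (n : ℕ) :
    ∀ ℓ : ℕ,
      PowerSeries.coeff ℓ (-((2 - U) ^ n * (3 * U - 2)⁻¹)) =
        (2 : ℚ) ^ ((n : ℤ) - 3 * ℓ - 1) *
          (∏ i ∈ Finset.range ℓ, ((3 * ℓ : ℤ) - n - i : ℚ)) / (Nat.factorial ℓ : ℚ) := by
  have hc0 : constantCoeff U = 0 := by
    rw [hU, constantCoeff_mk]; simp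
  have hcU : ∀ k : ℕ, coeff (k+1) U
      = (1/((k:ℚ)+1)) * (Nat.choose (3*k+1) k : ℚ) * (1/2^(3*k+2)) := by
    intro k
    rw [hU, coeff_mk]
    simp only [Nat.succ_ne_zero, if_false,
      show 3*(k+1)-2 = 3*k+1 from by omega, show (k+1)-1 = k from by omega,
      show 3*(k+1)-1 = 3*k+2 from by omega]
    push_cast; ring
  have h2 : constantCoeff (3*U-2) = -2 := by
    simp [map_sub, map_mul, hc0, map_ofNat]
  have h2ne : constantCoeff (3*U-2) ≠ 0 := by rw [h2]; norm_num
  have hW : (3*U-2) * (3*U-2)⁻¹ = 1 := PowerSeries.mul_inv_cancel _ h2ne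
  -- base n = 0
  have guniq : ∀ ℓ : ℕ, coeff ℓ (-(3*U-2)⁻¹) = v 0 ℓ := by
    intro ℓ
    induction ℓ with
    | zero =>
      rw [coeff_zero_eq_constantCoeff_apply, map_neg, PowerSeries.constantCoeff_inv, h2]
      rw [show v 0 0 = (2:ℚ)^((0:ℤ)-1) from v_zero 0]
      norm_num
    | succ l ih =>
      have h16 : (16*((l:ℚ)+1)*(2*l+1)) ≠ 0 := by positivity
      apply mul_left_cancel₀ h16
      calc 16*((l:ℚ)+1)*(2*l+1) * (coeff (l+1) (-(3*U-2)⁻¹))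
          = 3*(3*l+1)*(3*l+2) * (coeff l (-(3*U-2)⁻¹)) := grec U hc0 hUeq l
        _ = 3*(3*l+1)*(3*l+2) * v 0 l := by rw [ih]
        _ = 16*((l:ℚ)+1)*(2*l+1) * v 0 (l+1) := (v0_rec l).symm
  have key0 : (3*U-2) * PowerSeries.mk (v 0) = -1 := by
    have hmk : PowerSeries.mk (v 0) = -(3*U-2)⁻¹ := by
      ext ℓ; rw [coeff_mk]; exact (guniq ℓ).symm
    rw [hmk, mul_neg, hW]
  have h3ne : (3:ℚ⟦X⟧) ≠ 0 := by
    intro h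
    have := congrArg (constantCoeff) h
    simp [map_ofNat] at this
  -- key for all n
  have key : ∀ m : ℕ, (3*U-2) * PowerSeries.mk (v m) = -(2-U)^m := by
    intro m
    induction m using Nat.strong_induction_on with
    | _ m ih =>
      match m with
      | 0 => simpa using key0
      | 1 =>
        have h31 : (3:ℚ⟦X⟧) * PowerSeries.mk (v 1) = 4 * PowerSeries.mk (v 0) + 1 := by
          ext ℓ
          rw [show (3:ℚ⟦X⟧) = C 3 from (map_ofNat _ _).symm,
              show (4:ℚ⟦X⟧) = C 4 from (map_ofNat _ _).symm]
          rw [map_add, coeff_C_mul, coeff_C_mul, coeff_mk, coeff_mk, coeff_one]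
          match ℓ with
          | 0 => rw [v_zero, v_zero]; norm_num
          | (k+1) => rw [if_neg (Nat.succ_ne_zero k)]; rw [add_zero]; exact v1_id k
        apply mul_left_cancel₀ h3ne
        linear_combination (3*U-2) * h31 + 4*key0
      | 2 =>
        have key1 : (3*U-2) * PowerSeries.mk (v 1) = -(2-U)^1 := ih 1 (by omega)
        have h32 : (3:ℚ⟦X⟧) * PowerSeries.mk (v 2)
            = 8 * PowerSeries.mk (v 0) + 4 - U - 2 * PowerSeries.mk (v 1) := by
          ext ℓ
          rw [show (3:ℚ⟦X⟧) = C 3 from (map_ofNat _ _).symm,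
              show (4:ℚ⟦X⟧) = C 4 from (map_ofNat _ _).symm,
              show (8:ℚ⟦X⟧) = C 8 from (map_ofNat _ _).symm,
              show (2:ℚ⟦X⟧) = C 2 from (map_ofNat _ _).symm]
          rw [map_sub, map_sub, map_add, coeff_C_mul, coeff_C_mul, coeff_C_mul, coeff_mk,
            coeff_mk, coeff_mk, coeff_C]
          match ℓ with
          | 0 =>
            rw [coeff_zero_eq_constantCoeff_apply, hc0, if_pos rfl]
            rw [v_zero, v_zero, v_zero]; norm_num
          | (k+1) =>
            rw [if_neg (Nat.succ_ne_zero k), hcU k]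
            have := v2_id k
            linarith [this]
        apply mul_left_cancel₀ h3ne
        linear_combination (3*U-2) * h32 + 8*key0 + (-2)*key1
      | (m+3) =>
        have ih2 : (3*U-2) * PowerSeries.mk (v (m+2)) = -(2-U)^(m+2) := ih (m+2) (by omega)
        have ihm : (3*U-2) * PowerSeries.mk (v m) = -(2-U)^m := ih m (by omega)
        have hvm : PowerSeries.mk (v (m+3))
            = 2 * PowerSeries.mk (v (m+2)) - X * PowerSeries.mk (v m) := by
          ext ℓ
          rw [show (2:ℚ⟦X⟧) = C 2 from (map_ofNat _ _).symm]
          rw [map_sub, coeff_C_mul, coeff_mk, coeff_mk]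
          match ℓ with
          | 0 =>
            rw [coeff_zero_eq_constantCoeff_apply (X * _), map_mul, constantCoeff_X, zero_mul]
            rw [sub_zero]
            exact v3_id0 m
          | (k+1) =>
            rw [coeff_succ_X_mul, coeff_mk]
            exact v3_id m k
        rw [hvm]
        have hpow : (2-U)^(m+3) = (2-U)^m * (2-U)^3 := by ring
        linear_combination 2 * ih2 + (-(X:ℚ⟦X⟧)) * ihm + (-(2-U)^m) * hUeq
  intro ℓ
  have hfin : -((2 - U) ^ n * (3 * U - 2)⁻¹) = PowerSeries.mk (v n) := by
    calc -((2 - U) ^ n * (3 * U - 2)⁻¹)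
        = (-(2-U)^n) * (3*U-2)⁻¹ := by ring
      _ = ((3*U-2) * PowerSeries.mk (v n)) * (3*U-2)⁻¹ := by rw [key n]
      _ = PowerSeries.mk (v n) * ((3*U-2) * (3*U-2)⁻¹) := by ring
      _ = PowerSeries.mk (v n) := by rw [hW, mul_one]
  rw [hfin, coeff_mk]
  rfl


end FBT

theorem first_binet_term_coefficients
    (U : PowerSeries ℚ)
    (hU : U = PowerSeries.mk (fun m : ℕ => if m = 0 then 0 else
      (1 / (m : ℚ)) * (Nat.choose (3 * m - 2) (m - 1) : ℚ) * (1 / 2 ^ (3 * m - 1))))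
    (hUeq : U * (U - 2) ^ 2 = PowerSeries.X)
    (n : ℕ) :
    ∀ ℓ : ℕ,
      PowerSeries.coeff ℓ (-((2 - U) ^ n * (3 * U - 2)⁻¹)) =
        (2 : ℚ) ^ ((n : ℤ) - 3 * ℓ - 1) *
          (∏ i ∈ Finset.range ℓ, ((3 * ℓ : ℤ) - n - i : ℚ)) / (Nat.factorial ℓ : ℚ) :=
  FBT.main U hU hUeq n
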